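/- The chromatic index of H^{-11,2}_{3,1} equals 11. -/

import Mathlib

/-- The integral sum graph on vertex set `{r, ..., s} ⊆ ℤ`:
distinct `u, v` are adjacent iff `u + v` also lies in `{r, ..., s}`. -/
def intervalSumGraph (r s : ℤ) : SimpleGraph ℤ where
  Adj u v := u ≠ v ∧ u ∈ Set.Icc r s ∧ v ∈ Set.Icc r s ∧ u + v ∈ Set.Icc r s
  symm := ⟨by
    rintro u v ⟨h1, h2, h3, h4⟩
    exact ⟨h1.symm, h3, h2, by rwa [add_comm]⟩⟩
  loopless := ⟨fun u h => h.1 rfl⟩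

/-- The graph `H^{-i,s}_{m,j}`: obtained from the integral sum graph `G_{-i,s}`
by deleting the vertices `-m` and `j` and all edges whose endpoint labels sum
to `-m` or to `j`. -/
def HGraph (i s m j : ℤ) : SimpleGraph ℤ where
  Adj u v := u ≠ v ∧ u ∈ Set.Icc (-i) s ∧ v ∈ Set.Icc (-i) s ∧ u + v ∈ Set.Icc (-i) s ∧
    u ≠ -m ∧ v ≠ -m ∧ u ≠ j ∧ v ≠ j ∧ u + v ≠ -m ∧ u + v ≠ j
  symm := ⟨by
    rintro u v ⟨h1, h2, h3, h4, h5, h6, h7, h8, h9, h10⟩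
    exact ⟨h1.symm, h3, h2, by rwa [add_comm], h6, h5, h8, h7,
      by rwa [add_comm], by rwa [add_comm]⟩⟩
  loopless := ⟨fun u h => h.1 rfl⟩

/-- The chromatic index of a graph: the least `n` such that there is a proper
edge coloring with `n` colors (distinct edges sharing a vertex get distinct colors). -/
noncomputable def chromaticIndex {V : Type*} (G : SimpleGraph V) : ℕ :=
  sInf {n : ℕ | ∃ c : Sym2 V → Fin n,
    ∀ e ∈ G.edgeSet, ∀ f ∈ G.edgeSet, e ≠ f → (∃ v, v ∈ e ∧ v ∈ f) → c e ≠ c f}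

/-- The sum of the two endpoint labels of an edge. -/
def edgeSum (e : Sym2 ℤ) : ℤ := Sym2.lift ⟨fun a b => a + b, fun a b => add_comm a b⟩ e

/-- The edge-sum chromatic number: the number of nonempty edge-sum color classes. -/
noncomputable def edgeSumChromatic (G : SimpleGraph ℤ) : ℕ :=
  {k : ℤ | ∃ e ∈ G.edgeSet, edgeSum e = k}.ncard

/-- color of a sum -/
def gcol : ℤ → Fin 11 := fun k =>
  if k = -11 then 0 else if k = -10 then 1 else if k = -9 then 2 else
  if k = -8 then 3 else if k = -7 then 4 else if k = -6 then 5 else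
  if k = -5 then 6 else if k = -4 then 7 else if k = -2 then 8 else
  if k = -1 then 9 else if k = 0 then 9 else if k = 2 then 10 else 0

lemma gcol_key : ∀ s1 s2 : ℤ,
    -11 ≤ s1 → s1 ≤ 2 → s1 ≠ -3 → s1 ≠ 1 →
    -11 ≤ s2 → s2 ≤ 2 → s2 ≠ -3 → s2 ≠ 1 →
    gcol s1 = gcol s2 →
    s1 = s2 ∨ (s1 = -1 ∧ s2 = 0) ∨ (s1 = 0 ∧ s2 = -1) := by
  intro s1 s2 a1 a2 a3 a4 b1 b2 b3 b4 h
  have h1 : s1 = -11 ∨ s1 = -10 ∨ s1 = -9 ∨ s1 = -8 ∨ s1 = -7 ∨ s1 = -6 ∨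
      s1 = -5 ∨ s1 = -4 ∨ s1 = -2 ∨ s1 = -1 ∨ s1 = 0 ∨ s1 = 2 := by omega
  have h2 : s2 = -11 ∨ s2 = -10 ∨ s2 = -9 ∨ s2 = -8 ∨ s2 = -7 ∨ s2 = -6 ∨
      s2 = -5 ∨ s2 = -4 ∨ s2 = -2 ∨ s2 = -1 ∨ s2 = 0 ∨ s2 = 2 := by omega
  rcases h1 with rfl|rfl|rfl|rfl|rfl|rfl|rfl|rfl|rfl|rfl|rfl|rfl <;>
    rcases h2 with rfl|rfl|rfl|rfl|rfl|rfl|rfl|rfl|rfl|rfl|rfl|rfl <;>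
    revert h <;> decide

lemma hgraph_adj (u v : ℤ) : (HGraph 11 2 3 1).Adj u v ↔
    u ≠ v ∧ (-11 ≤ u ∧ u ≤ 2) ∧ (-11 ≤ v ∧ v ≤ 2) ∧ (-11 ≤ u + v ∧ u + v ≤ 2) ∧
    u ≠ -3 ∧ v ≠ -3 ∧ u ≠ 1 ∧ v ≠ 1 ∧ u + v ≠ -3 ∧ u + v ≠ 1 := by
  simp [HGraph, Set.mem_Icc]

def nb : Fin 11 → ℤ := ![-11, -10, -9, -8, -7, -6, -5, -4, -2, -1, 2]

theorem chromaticIndex_H_11_2_3_1 : chromaticIndex (HGraph 11 2 3 1) = 11 := by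
  have hmem : 11 ∈ {n : ℕ | ∃ c : Sym2 ℤ → Fin n,
      ∀ e ∈ (HGraph 11 2 3 1).edgeSet, ∀ f ∈ (HGraph 11 2 3 1).edgeSet,
        e ≠ f → (∃ v, v ∈ e ∧ v ∈ f) → c e ≠ c f} := by
    refine ⟨Sym2.lift ⟨fun a b => gcol (a + b), fun a b => by dsimp only; rw [add_comm]⟩, ?_⟩
    intro e he f hf hne ⟨v, hve, hvf⟩
    obtain ⟨a, ha⟩ : ∃ a, e = s(v, a) := ⟨Sym2.Mem.other hve, (Sym2.other_spec hve).symm⟩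
    obtain ⟨b, hb⟩ : ∃ b, f = s(v, b) := ⟨Sym2.Mem.other hvf, (Sym2.other_spec hvf).symm⟩
    subst ha hb
    rw [SimpleGraph.mem_edgeSet, hgraph_adj] at he hf
    obtain ⟨e1, ⟨e2, e3⟩, ⟨e4, e5⟩, ⟨e6, e7⟩, e8, e9, e10, e11, e12, e13⟩ := he
    obtain ⟨f1, _, ⟨f4, f5⟩, ⟨f6, f7⟩, _, f9, _, f11, f12, f13⟩ := hf
    have hab : a ≠ b := by rintro rfl; exact hne rfl
    simp only [Sym2.lift_mk]
    intro hcol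
    rcases gcol_key (v + a) (v + b) e6 e7 e12 e13 f6 f7 f12 f13 hcol with h | h | h <;> omega
  have hlb : ∀ n ∈ {n : ℕ | ∃ c : Sym2 ℤ → Fin n,
      ∀ e ∈ (HGraph 11 2 3 1).edgeSet, ∀ f ∈ (HGraph 11 2 3 1).edgeSet,
        e ≠ f → (∃ v, v ∈ e ∧ v ∈ f) → c e ≠ c f}, 11 ≤ n := by
    rintro n ⟨c, hc⟩
    have hadj : ∀ i : Fin 11, s(0, nb i) ∈ (HGraph 11 2 3 1).edgeSet := by
      intro i
      rw [SimpleGraph.mem_edgeSet, hgraph_adj]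
      fin_cases i <;> decide
    have hnz : ∀ i : Fin 11, nb i ≠ 0 := by decide
    have hnbinj : Function.Injective nb := by decide
    have hF : Function.Injective (fun i : Fin 11 => c s(0, nb i)) := by
      intro i j hij
      by_contra hne
      have hnb : nb i ≠ nb j := fun h => hne (hnbinj h)
      have hedge : s(0, nb i) ≠ s(0, nb j) := by
        intro h
        rcases Sym2.eq_iff.mp h with ⟨-, h2⟩ | ⟨h1, -⟩
        · exact hnb h2
        · exact hnz j h1.symm
      exact hc _ (hadj i) _ (hadj j) hedge ⟨0, by simp, by simp⟩ hij
    have := Fintype.card_le_of_injective _ hF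
    simpa using this
  exact le_antisymm (Nat.sInf_le hmem) (le_csInf ⟨11, hmem⟩ hlb)
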